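/- Let K be a real n×n positive semidefinite matrix with positive semidefinite square root K^{1/2}, let P be a real n×m matrix, let r ≤ m, and set C = KP and W = PᵀKP; assume W is invertible. Let K^{1/2}P = F S Nᵀ be a singular value decomposition with F n×m having orthonormal columns, N m×m orthogonal, and S m×m diagonal with positive diagonal entries. Then there exists a real n×r matrix H with orthonormal columns (HᵀH = I_r) such that G := K^{1/2} H Hᵀ K^{1/2} is a best rank-r approximation of CW⁻¹Cᵀ in the Frobenius norm (i.e. ‖CW⁻¹Cᵀ − G‖_F ≤ ‖CW⁻¹Cᵀ − G′‖_F for every n×n matrix G′ with rank ≤ r); moreover K − G is positive semidefinite and trace(K − G) equals the minimum of ‖K^{1/2} − FT‖_F² over all real m×n matrices T with rank(T) ≤ r. -/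

import Mathlib

set_option linter.unusedSectionVars false
set_option maxHeartbeats 1000000
open Matrix

/-- Frobenius norm of a real matrix: ‖A‖_F = sqrt(trace(Aᵀ A)). -/
noncomputable def frobNorm {α β : Type*} [Fintype α] [Fintype β] (A : Matrix α β ℝ) : ℝ :=
  Real.sqrt (Matrix.trace (Aᵀ * A))

/-- The positive semidefinite square root, as defined in the older Mathlib (removed since). -/
noncomputable def Matrix.PosSemidef.sqrt {n : Type*} [Fintype n] [DecidableEq n] {𝕜 : Type*} [RCLike 𝕜]
    [PartialOrder 𝕜] [StarOrderedRing 𝕜] {A : Matrix n n 𝕜} (hA : A.PosSemidef) : Matrix n n 𝕜 :=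
  hA.1.eigenvectorUnitary.1 * diagonal ((↑) ∘ (√·) ∘ hA.1.eigenvalues) *
    (star hA.1.eigenvectorUnitary : Matrix n n 𝕜)

open Finset

namespace Stmt5Aux

variable {ι κ α β : Type*} [Fintype ι] [Fintype κ] [Fintype α] [Fintype β]
variable {m' : Type*} [Fintype m'] [DecidableEq m']


lemma real_conjT (B : Matrix α β ℝ) : Bᴴ = Bᵀ := by
  ext i j; simp [conjTranspose_apply]

lemma spectral {Y : Matrix m' m' ℝ} (hY : Y.IsHermitian) :
    ∃ U : Matrix m' m' ℝ, Uᵀ * U = 1 ∧ U * Uᵀ = 1 ∧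
      Y = U * diagonal hY.eigenvalues * Uᵀ := by
  refine ⟨(hY.eigenvectorUnitary : Matrix m' m' ℝ), ?_, ?_, ?_⟩
  · have h := (Unitary.mem_iff.mp hY.eigenvectorUnitary.2).1
    rwa [Matrix.star_eq_conjTranspose, real_conjT] at h
  · have h := (Unitary.mem_iff.mp hY.eigenvectorUnitary.2).2
    rwa [Matrix.star_eq_conjTranspose, real_conjT] at h
  · have h := hY.spectral_theorem
    rwa [Unitary.conjStarAlgAut_apply, Matrix.star_eq_conjTranspose, real_conjT, RCLike.ofReal_real_eq_id,
      Function.id_comp] at h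

lemma psd_diag_nonneg {X : Matrix m' m' ℝ} (hX : X.PosSemidef) (i : m') : 0 ≤ X i i := by
  exact hX.diag_nonneg

lemma psd_sqrt_mul_self {X : Matrix m' m' ℝ} (hX : X.PosSemidef) : hX.sqrt * hX.sqrt = X := by
  have hU : (star hX.1.eigenvectorUnitary : Matrix m' m' ℝ) * hX.1.eigenvectorUnitary = 1 :=
    Unitary.coe_star_mul_self _
  have hspec := hX.1.spectral_theorem
  rw [Unitary.conjStarAlgAut_apply] at hspec
  unfold Matrix.PosSemidef.sqrt
  calc (hX.1.eigenvectorUnitary : Matrix m' m' ℝ) * diagonal ((↑) ∘ (√·) ∘ hX.1.eigenvalues) *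
        (star hX.1.eigenvectorUnitary : Matrix m' m' ℝ) *
        ((hX.1.eigenvectorUnitary : Matrix m' m' ℝ) * diagonal ((↑) ∘ (√·) ∘ hX.1.eigenvalues) *
        (star hX.1.eigenvectorUnitary : Matrix m' m' ℝ))
      = (hX.1.eigenvectorUnitary : Matrix m' m' ℝ) * (diagonal ((↑) ∘ (√·) ∘ hX.1.eigenvalues) *
        ((star hX.1.eigenvectorUnitary : Matrix m' m' ℝ) * (hX.1.eigenvectorUnitary : Matrix m' m' ℝ)) *
        diagonal ((↑) ∘ (√·) ∘ hX.1.eigenvalues)) *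
        (star hX.1.eigenvectorUnitary : Matrix m' m' ℝ) := by simp only [Matrix.mul_assoc]
    _ = X := by
      rw [hU, Matrix.mul_one, diagonal_mul_diagonal]
      conv_rhs => rw [hspec]
      congr 3
      funext i
      simp [Real.mul_self_sqrt (hX.eigenvalues_nonneg i)]

lemma psd_sqrt_psd {X : Matrix m' m' ℝ} (hX : X.PosSemidef) : hX.sqrt.PosSemidef := by
  unfold Matrix.PosSemidef.sqrt
  have hD : (diagonal ((↑) ∘ (√·) ∘ hX.1.eigenvalues : m' → ℝ)).PosSemidef :=
    posSemidef_diagonal_iff.2 (fun i => by simp [Real.sqrt_nonneg])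
  have h := hD.mul_mul_conjTranspose_same (hX.1.eigenvectorUnitary : Matrix m' m' ℝ)
  rwa [← Matrix.star_eq_conjTranspose] at h

lemma submatrix_orthonormal [DecidableEq ι] (U : Matrix m' m' ℝ) (hU : Uᵀ * U = 1)
    (f : ι → m') (hf : Function.Injective f) :
    (U.submatrix id f)ᵀ * (U.submatrix id f) = 1 := by
  ext a b
  have h1 : ((U.submatrix id f)ᵀ * (U.submatrix id f)) a b = (Uᵀ * U) (f a) (f b) := by
    simp [Matrix.mul_apply]
  rw [h1, hU]
  by_cases h : a = b
  · simp [h, Matrix.one_apply]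
  · simp only [Matrix.one_apply, if_neg h, if_neg (fun hh => h (hf hh))]

lemma conj_submatrix (U : Matrix m' m' ℝ) (M' : Matrix m' m' ℝ) (f : ι → m') :
    (U.submatrix id f)ᵀ * M' * (U.submatrix id f) = (Uᵀ * M' * U).submatrix f f := by
  ext a b
  simp [Matrix.mul_apply, Finset.sum_mul, Finset.mul_sum]

lemma submatrix_mul_transpose_eq (U : Matrix m' m' ℝ) (f : ι ↪ m') :
    (U.submatrix id f) * (U.submatrix id f)ᵀ
      = U * diagonal (fun i => if i ∈ Finset.univ.map f then (1:ℝ) else 0) * Uᵀ := by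
  ext a b
  have hL : ((U.submatrix id f) * (U.submatrix id f)ᵀ) a b = ∑ j : ι, U a (f j) * U b (f j) := by
    simp [Matrix.mul_apply]
  have hR : (U * diagonal (fun i => if i ∈ Finset.univ.map f then (1:ℝ) else 0) * Uᵀ) a b
      = ∑ l, (if l ∈ Finset.univ.map f then U a l * U b l else 0) := by
    rw [Matrix.mul_apply]
    apply Finset.sum_congr rfl
    intro l _
    rw [Matrix.mul_diagonal, Matrix.transpose_apply]
    by_cases h : l ∈ Finset.univ.map f <;> simp [h]
  rw [hL, hR, Finset.sum_ite_mem, Finset.univ_inter, Finset.sum_map]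



lemma trace_tmul_eq_sum (X : Matrix α β ℝ) :
    trace (Xᵀ * X) = ∑ j, ∑ i, X i j ^ 2 := by
  simp [Matrix.trace, Matrix.mul_apply, Matrix.diag, sq]

lemma trace_tmul_nonneg (X : Matrix α β ℝ) : 0 ≤ trace (Xᵀ * X) := by
  rw [trace_tmul_eq_sum]
  positivity

lemma eq_zero_of_trace_tmul (X : Matrix α β ℝ) (h : trace (Xᵀ * X) ≤ 0) : X = 0 := by
  rw [trace_tmul_eq_sum] at h
  ext i j
  have h1 : ∀ j ∈ Finset.univ (α := β), (0:ℝ) ≤ ∑ i, X i j ^ 2 := by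
    intro j _; positivity
  have h2 := (Finset.sum_eq_zero_iff_of_nonneg h1).1 (le_antisymm h (Finset.sum_nonneg h1)) j (mem_univ _)
  have h3 : ∀ i ∈ Finset.univ (α := α), (0:ℝ) ≤ X i j ^ 2 := fun i _ => sq_nonneg _
  have := (Finset.sum_eq_zero_iff_of_nonneg h3).1 h2 i (mem_univ _)
  simpa [pow_eq_zero_iff] using this

lemma trace_t_comm (X Y : Matrix α β ℝ) : trace (Xᵀ * Y) = trace (Yᵀ * X) := by
  rw [← Matrix.trace_transpose (Yᵀ * X), Matrix.transpose_mul, Matrix.transpose_transpose]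

lemma trace_expand (X Y : Matrix α β ℝ) :
    trace ((X - Y)ᵀ * (X - Y)) =
      trace (Xᵀ * X) - 2 * trace (Xᵀ * Y) + trace (Yᵀ * Y) := by
  rw [Matrix.transpose_sub, Matrix.sub_mul, Matrix.mul_sub, Matrix.mul_sub, Matrix.trace_sub,
    Matrix.trace_sub, Matrix.trace_sub, trace_t_comm Y X]
  ring



lemma scalar_lemma (μ t : m' → ℝ) (r : ℕ)
    (hμ : ∀ i, 0 ≤ μ i) (ht0 : ∀ i, 0 ≤ t i) (ht1 : ∀ i, t i ≤ 1)
    (hts : ∑ i, t i ≤ r) (A : Finset m') (hA : A.card = r)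
    (htop : ∀ i ∈ A, ∀ j ∉ A, μ j ≤ μ i) :
    ∑ i, μ i * t i ≤ ∑ i ∈ A, μ i := by
  rcases A.eq_empty_or_nonempty with rfl | hAne
  · simp only [Finset.card_empty] at hA
    subst hA
    have : ∑ i, t i = 0 := le_antisymm (by simpa using hts) (Finset.sum_nonneg fun i _ => ht0 i)
    have hz := (Finset.sum_eq_zero_iff_of_nonneg (fun i _ => ht0 i)).1 this
    simp only [Finset.sum_empty]
    have : ∑ i, μ i * t i = 0 := by
      apply Finset.sum_eq_zero; intro i _; rw [hz i (mem_univ _)]; ring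
    simp [this]
  · obtain ⟨i0, hi0, hc⟩ := Finset.exists_mem_eq_inf' hAne μ
    set c := A.inf' hAne μ with hcdef
    have hcle : ∀ i ∈ A, c ≤ μ i := fun i hi => Finset.inf'_le _ hi
    have hcge : ∀ j ∉ A, μ j ≤ c := fun j hj => hc ▸ htop i0 hi0 j hj
    have hc0 : 0 ≤ c := hc ▸ hμ i0
    have hsplit : ∑ i, μ i * t i = ∑ i ∈ A, μ i * t i + ∑ i ∈ Aᶜ, μ i * t i :=
      (Finset.sum_add_sum_compl A _).symm
    have htsplit : ∑ i, t i = ∑ i ∈ A, t i + ∑ i ∈ Aᶜ, t i :=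
      (Finset.sum_add_sum_compl A _).symm
    have h1 : ∑ i ∈ Aᶜ, μ i * t i ≤ c * ∑ i ∈ Aᶜ, t i := by
      rw [Finset.mul_sum]
      apply Finset.sum_le_sum
      intro j hj
      exact mul_le_mul_of_nonneg_right (hcge j (by simpa using hj)) (ht0 j)
    have h2 : ∑ i ∈ Aᶜ, t i ≤ (r : ℝ) - ∑ i ∈ A, t i := by
      have := htsplit ▸ hts; linarith
    have h3 : c * ((r:ℝ) - ∑ i ∈ A, t i) ≤ ∑ i ∈ A, (μ i - μ i * t i) := by
      have : ∑ i ∈ A, (μ i - μ i * t i) = ∑ i ∈ A, μ i * (1 - t i) := by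
        apply Finset.sum_congr rfl; intro i _; ring
      rw [this]
      have hcr : c * ((r:ℝ) - ∑ i ∈ A, t i) = ∑ i ∈ A, c * (1 - t i) := by
        have : ∑ i ∈ A, c * (1 - t i) = ∑ i ∈ A, (c - c * t i) := by
          apply Finset.sum_congr rfl; intro i _; ring
        rw [this, Finset.sum_sub_distrib, Finset.sum_const, ← hA, nsmul_eq_mul, ← Finset.mul_sum]
        ring
      rw [hcr]
      apply Finset.sum_le_sum
      intro i hi
      exact mul_le_mul_of_nonneg_right (hcle i hi) (by linarith [ht1 i])
    have h4 : ∑ i ∈ A, (μ i - μ i * t i) = ∑ i ∈ A, μ i - ∑ i ∈ A, μ i * t i :=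
      Finset.sum_sub_distrib _ _
    have hAt0 : 0 ≤ ∑ i ∈ A, t i := Finset.sum_nonneg fun i _ => ht0 i
    nlinarith [h1, h2, h3, hsplit]

lemma exists_top_set (μ : m' → ℝ) (r : ℕ) (hr : r ≤ Fintype.card m') :
    ∃ A : Finset m', A.card = r ∧ ∀ i ∈ A, ∀ j ∉ A, μ j ≤ μ i := by
  induction r with
  | zero => exact ⟨∅, rfl, by simp⟩
  | succ k ih =>
    obtain ⟨A, hcard, htop⟩ := ih (le_of_lt (Nat.lt_of_lt_of_le (Nat.lt_succ_self k) hr))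
    have hne : Aᶜ.Nonempty := by
      rw [← Finset.card_pos, Finset.card_compl, hcard]
      omega
    obtain ⟨j0, hj0, hj0max⟩ := Finset.exists_mem_eq_sup' hne μ
    refine ⟨insert j0 A, ?_, ?_⟩
    · rw [Finset.card_insert_of_notMem (by simpa using hj0), hcard]
    · intro i hi j hj
      have hjnA : j ∉ A := fun h => hj (Finset.mem_insert_of_mem h)
      rcases Finset.mem_insert.1 hi with rfl | hiA
      · have hjc : j ∈ Aᶜ := Finset.mem_compl.2 hjnA
        rw [← hj0max]
        exact Finset.le_sup' μ hjc
      · exact htop i hiA j hjnA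


lemma kyfan {r : ℕ} (V : Matrix m' m' ℝ) (hV2 : V * Vᵀ = 1)
    (μ : m' → ℝ) (hμ : ∀ i, 0 ≤ μ i)
    (A : Finset m') (hA : A.card = r) (htop : ∀ i ∈ A, ∀ j ∉ A, μ j ≤ μ i)
    [DecidableEq ι] (U : Matrix m' ι ℝ) (hU : Uᵀ * U = 1) (hcard : Fintype.card ι ≤ r) :
    trace (Uᵀ * (V * diagonal μ * Vᵀ) * U) ≤ ∑ i ∈ A, μ i := by
  set C := Vᵀ * U with hC
  have hrw : Uᵀ * (V * diagonal μ * Vᵀ) * U = Cᵀ * (diagonal μ * C) := by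
    rw [hC, Matrix.transpose_mul, Matrix.transpose_transpose]
    simp only [Matrix.mul_assoc]
  have hCC : Cᵀ * C = 1 := by
    rw [hC, Matrix.transpose_mul, Matrix.transpose_transpose, Matrix.mul_assoc,
      ← Matrix.mul_assoc V, hV2, Matrix.one_mul, hU]
  set t : m' → ℝ := fun i => ∑ j, C i j ^ 2 with ht
  have htr : trace (Cᵀ * (diagonal μ * C)) = ∑ i, μ i * t i := by
    have h1 : trace (Cᵀ * (diagonal μ * C)) = ∑ j, ∑ i, C i j * (μ i * C i j) := by
      simp only [Matrix.trace, Matrix.diag]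
      apply Finset.sum_congr rfl
      intro j _
      rw [Matrix.mul_apply]
      apply Finset.sum_congr rfl
      intro i _
      rw [Matrix.transpose_apply, Matrix.diagonal_mul]
    rw [h1, Finset.sum_comm]
    apply Finset.sum_congr rfl
    intro i _
    rw [ht]
    simp only [Finset.mul_sum]
    apply Finset.sum_congr rfl
    intro j _; ring
  have ht0 : ∀ i, 0 ≤ t i := fun i => Finset.sum_nonneg fun j _ => sq_nonneg _
  have hCCC : C * Cᵀ * (C * Cᵀ) = C * Cᵀ := by
    rw [Matrix.mul_assoc, ← Matrix.mul_assoc Cᵀ, hCC, Matrix.one_mul]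
  have hid : (1 - C * Cᵀ) * (1 - C * Cᵀ) = 1 - C * Cᵀ := by
    rw [Matrix.sub_mul, Matrix.mul_sub, Matrix.mul_sub, hCCC]
    simp only [Matrix.one_mul, Matrix.mul_one]
    abel
  have hpsd : (1 - C * Cᵀ).PosSemidef := by
    have h := Matrix.posSemidef_conjTranspose_mul_self (1 - C * Cᵀ)
    rwa [real_conjT, Matrix.transpose_sub, Matrix.transpose_one, Matrix.transpose_mul,
      Matrix.transpose_transpose, hid] at h
  have ht1 : ∀ i, t i ≤ 1 := by
    intro i
    have hdiag := psd_diag_nonneg hpsd i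
    have hcc : (C * Cᵀ) i i = t i := by simp [Matrix.mul_apply, ht, sq]
    rw [Matrix.sub_apply, Matrix.one_apply_eq, hcc] at hdiag
    linarith
  have hts : ∑ i, t i ≤ (r : ℝ) := by
    have h1 : ∑ i, t i = trace (Cᵀ * C) := by
      rw [trace_tmul_eq_sum, Finset.sum_comm]
    rw [h1, hCC, Matrix.trace_one]
    exact_mod_cast hcard
  rw [hrw, htr]
  exact scalar_lemma μ t r hμ ht0 ht1 hts A hA htop

lemma lemmaA {r : ℕ} (V : Matrix m' m' ℝ) (hV2 : V * Vᵀ = 1)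
    (μ : m' → ℝ) (hμ : ∀ i, 0 ≤ μ i)
    (A : Finset m') (hA : A.card = r) (htop : ∀ i ∈ A, ∀ j ∉ A, μ j ≤ μ i)
    (Y : Matrix m' m' ℝ) (hY : Y.PosSemidef) (hrank : Y.rank ≤ r)
    (hle : (V * diagonal μ * Vᵀ - Y).PosSemidef) :
    trace Y ≤ ∑ i ∈ A, μ i := by
  obtain ⟨U, hU1, hU2, hYeq⟩ := spectral hY.1
  set ν := hY.1.eigenvalues with hν
  set M' := V * diagonal μ * Vᵀ with hM'
  have htrY : trace Y = ∑ j, ν j := by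
    rw [hYeq, Matrix.trace_mul_cycle, hU1, Matrix.one_mul, Matrix.trace_diagonal]
  have hZdiag : Uᵀ * Y * U = diagonal ν := by
    rw [hYeq]
    calc Uᵀ * (U * diagonal ν * Uᵀ) * U = (Uᵀ * U) * diagonal ν * (Uᵀ * U) := by
          simp only [Matrix.mul_assoc]
      _ = diagonal ν := by rw [hU1, Matrix.one_mul, Matrix.mul_one]
  have hpsd : (Uᵀ * M' * U - diagonal ν).PosSemidef := by
    have h := hle.conjTranspose_mul_mul_same U
    rwa [real_conjT, Matrix.mul_sub, Matrix.sub_mul, hZdiag] at h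
  have hνle : ∀ j, ν j ≤ (Uᵀ * M' * U) j j := by
    intro j
    have h0 := psd_diag_nonneg hpsd j
    rw [Matrix.sub_apply, Matrix.diagonal_apply_eq] at h0
    linarith
  have hcard : Fintype.card {j // ν j ≠ 0} ≤ r := by
    rw [← hY.1.rank_eq_card_non_zero_eigs]
    exact hrank
  set e : {j // ν j ≠ 0} ↪ m' := Function.Embedding.subtype _ with he
  set Us := U.submatrix id e with hUsdef
  have hUs : Usᵀ * Us = 1 := submatrix_orthonormal U hU1 e e.injective
  have hsum : ∑ j, ν j = ∑ j : {j // ν j ≠ 0}, ν j := by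
    rw [← Finset.sum_filter_ne_zero Finset.univ,
      ← Finset.sum_coe_sort (Finset.univ.filter (fun j => ν j ≠ 0)) ν]
    exact Fintype.sum_equiv (Equiv.subtypeEquivRight (by simp)) _ _ (fun x => rfl)
  have hineq : ∑ j : {j // ν j ≠ 0}, ν j ≤ trace (Usᵀ * M' * Us) := by
    rw [hUsdef, conj_submatrix]
    have h2 : trace ((Uᵀ * M' * U).submatrix e e)
        = ∑ j : {j // ν j ≠ 0}, (Uᵀ * M' * U) (e j) (e j) := by
      simp [Matrix.trace, Matrix.diag]
    rw [h2]
    exact Finset.sum_le_sum fun j _ => hνle (e j)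
  have hky := kyfan V hV2 μ hμ A hA htop Us hUs hcard
  rw [htrY, hsum]
  exact le_trans hineq hky

lemma exists_proj {r : ℕ} {m'' : Type} [Fintype m''] [DecidableEq m''] {β' : Type*} [Fintype β']
    (X : Matrix m'' β' ℝ) (hX : X.rank ≤ r) :
    ∃ (ιt : Type) (_ : Fintype ιt) (_ : DecidableEq ιt) (U : Matrix m'' ιt ℝ),
      Fintype.card ιt ≤ r ∧ Uᵀ * U = 1 ∧ U * Uᵀ * X = X := by
  have hZ : (X * Xᵀ).PosSemidef := by
    have h := Matrix.posSemidef_self_mul_conjTranspose X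
    rwa [real_conjT] at h
  obtain ⟨U, hU1, hU2, hZeq⟩ := spectral hZ.1
  set ν := hZ.1.eigenvalues with hν
  set e : {j // ν j ≠ 0} ↪ m'' := Function.Embedding.subtype _ with he
  set Us := U.submatrix id e with hUsdef
  have hUs : Usᵀ * Us = 1 := submatrix_orthonormal U hU1 e e.injective
  refine ⟨{j // ν j ≠ 0}, inferInstance, inferInstance, Us, ?_, hUs, ?_⟩
  · rw [← hZ.1.rank_eq_card_non_zero_eigs]
    exact le_trans (Matrix.rank_mul_le_left X Xᵀ) hX
  · -- Q X = X
    set Q := Us * Usᵀ with hQdef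
    have hQt : Qᵀ = Q := by rw [hQdef, Matrix.transpose_mul, Matrix.transpose_transpose]
    have hQQ : Q * Q = Q := by
      rw [hQdef, Matrix.mul_assoc, ← Matrix.mul_assoc Usᵀ, hUs, Matrix.one_mul]
    have hind : ∀ i, (if i ∈ Finset.univ.map e then (1:ℝ) else 0) * ν i = ν i := by
      intro i
      by_cases h : ν i = 0
      · simp [h]
      · have : i ∈ Finset.univ.map e := by
          rw [Finset.mem_map]
          exact ⟨⟨i, h⟩, Finset.mem_univ _, rfl⟩
        simp [this]
    have hQZ : Q * (X * Xᵀ) = X * Xᵀ := by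
      rw [hQdef, hUsdef, submatrix_mul_transpose_eq U e, hZeq]
      calc U * diagonal (fun i => if i ∈ Finset.univ.map e then (1:ℝ) else 0) * Uᵀ *
            (U * diagonal ν * Uᵀ)
          = U * (diagonal (fun i => if i ∈ Finset.univ.map e then (1:ℝ) else 0) * ((Uᵀ * U) *
            diagonal ν)) * Uᵀ := by simp only [Matrix.mul_assoc]
        _ = U * diagonal ν * Uᵀ := by
            rw [hU1, Matrix.one_mul, Matrix.diagonal_mul_diagonal]
            have hd : (fun i => (if i ∈ Finset.univ.map e then (1:ℝ) else 0) * ν i) = ν :=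
              funext hind
            rw [hd]
    have htr0 : trace ((X - Q * X)ᵀ * (X - Q * X)) ≤ 0 := by
      have hxx : trace (Xᵀ * X) = trace (X * Xᵀ) := Matrix.trace_mul_comm Xᵀ X
      have h1 : trace (Xᵀ * (Q * X)) = trace (X * Xᵀ) := by
        rw [Matrix.trace_mul_comm, Matrix.mul_assoc, hQZ]
      have h2 : trace ((Q * X)ᵀ * (Q * X)) = trace (X * Xᵀ) := by
        have e1 : (Q * X)ᵀ * (Q * X) = Xᵀ * (Q * X) := by
          rw [Matrix.transpose_mul, hQt, Matrix.mul_assoc, ← Matrix.mul_assoc Q Q X, hQQ]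
        rw [e1]; exact h1
      rw [trace_expand, h1, h2, hxx]
      linarith
    have h0 := eq_zero_of_trace_tmul _ htr0
    exact (sub_eq_zero.mp h0).symm

lemma trace_conj_pair {α β : Type*} [Fintype α] [Fintype β] [DecidableEq β]
    (J : Matrix α β ℝ) (d e g : β → ℝ) (hJJ : Jᵀ * J = Matrix.diagonal g) :
    trace ((J * Matrix.diagonal d * Jᵀ) * (J * Matrix.diagonal e * Jᵀ))
      = ∑ i, d i * g i * e i * g i := by
  have h1 : (J * Matrix.diagonal d * Jᵀ) * (J * Matrix.diagonal e * Jᵀ)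
      = J * (Matrix.diagonal d * (Jᵀ * J) * (Matrix.diagonal e * Jᵀ)) := by
    simp only [Matrix.mul_assoc]
  rw [h1, Matrix.trace_mul_comm, hJJ]
  calc trace (Matrix.diagonal d * Matrix.diagonal g * (Matrix.diagonal e * Jᵀ) * J)
      = trace (Matrix.diagonal d * Matrix.diagonal g * Matrix.diagonal e * (Jᵀ * J)) := by
        simp only [Matrix.mul_assoc]
    _ = trace (Matrix.diagonal d * Matrix.diagonal g * Matrix.diagonal e * Matrix.diagonal g) := by
        rw [hJJ]
    _ = ∑ i, d i * g i * e i * g i := by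
        simp only [Matrix.diagonal_mul_diagonal]
        rw [Matrix.trace_diagonal]


end Stmt5Aux

open Stmt5Aux

theorem stmt_5 {n m r : ℕ} (hrm : r ≤ m)
    (K : Matrix (Fin n) (Fin n) ℝ) (hK : K.PosSemidef)
    (P : Matrix (Fin n) (Fin m) ℝ)
    (C : Matrix (Fin n) (Fin m) ℝ) (W : Matrix (Fin m) (Fin m) ℝ)
    (hC : C = K * P) (hW : W = Pᵀ * K * P) (hWinv : IsUnit W)
    -- singular value decomposition K^{1/2} P = F S Nᵀ
    (F : Matrix (Fin n) (Fin m) ℝ) (N : Matrix (Fin m) (Fin m) ℝ) (s : Fin m → ℝ)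
    (hF : Fᵀ * F = 1) (hN : Nᵀ * N = 1) (hs : ∀ i, 0 < s i)
    (hSVD : hK.sqrt * P = F * Matrix.diagonal s * Nᵀ) :
    ∃ H : Matrix (Fin n) (Fin r) ℝ, Hᵀ * H = 1 ∧
      (∀ G' : Matrix (Fin n) (Fin n) ℝ, G'.rank ≤ r →
        frobNorm (C * W⁻¹ * Cᵀ - hK.sqrt * H * Hᵀ * hK.sqrt)
          ≤ frobNorm (C * W⁻¹ * Cᵀ - G')) ∧
      (K - hK.sqrt * H * Hᵀ * hK.sqrt).PosSemidef ∧
      IsLeast {x : ℝ | ∃ T : Matrix (Fin m) (Fin n) ℝ, T.rank ≤ r ∧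
          x = frobNorm (hK.sqrt - F * T) ^ 2}
        (Matrix.trace (K - hK.sqrt * H * Hᵀ * hK.sqrt)) := by
  classical
  set A := hK.sqrt with hAdef
  have hA : A.PosSemidef := psd_sqrt_psd hK
  have hAt : Aᵀ = A := by rw [← real_conjT]; exact hA.1
  have hAA : A * A = K := psd_sqrt_mul_self hK
  have hNN : N * Nᵀ = 1 := mul_eq_one_comm.mp hN
  -- cancellation helpers
  have cN : ∀ {p : Type} [Fintype p] (X : Matrix (Fin m) p ℝ), Nᵀ * (N * X) = X := by
    intro p _ X; rw [← Matrix.mul_assoc, hN, Matrix.one_mul]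
  have cF : ∀ {p : Type} [Fintype p] (X : Matrix (Fin m) p ℝ), Fᵀ * (F * X) = X := by
    intro p _ X; rw [← Matrix.mul_assoc, hF, Matrix.one_mul]
  set sinv : Fin m → ℝ := fun i => (s i)⁻¹ * (s i)⁻¹ with hsinvdef
  have keySS : Matrix.diagonal s * Matrix.diagonal sinv * Matrix.diagonal s = 1 := by
    simp only [Matrix.diagonal_mul_diagonal]
    ext i j
    by_cases hij : i = j
    · subst hij
      have h := (hs i).ne'
      rw [Matrix.diagonal_apply_eq, Matrix.one_apply_eq, hsinvdef]
      field_simp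
    · rw [Matrix.diagonal_apply_ne _ hij, Matrix.one_apply_ne hij]
  have keySS' : Matrix.diagonal s * Matrix.diagonal s * Matrix.diagonal sinv = 1 := by
    simp only [Matrix.diagonal_mul_diagonal]
    ext i j
    by_cases hij : i = j
    · subst hij
      have h := (hs i).ne'
      rw [Matrix.diagonal_apply_eq, Matrix.one_apply_eq, hsinvdef]
      field_simp
    · rw [Matrix.diagonal_apply_ne _ hij, Matrix.one_apply_ne hij]
  have cS : ∀ {p : Type} [Fintype p] (X : Matrix (Fin m) p ℝ),
      Matrix.diagonal s * (Matrix.diagonal sinv * (Matrix.diagonal s * X)) = X := by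
    intro p _ X
    rw [← Matrix.mul_assoc, ← Matrix.mul_assoc, keySS, Matrix.one_mul]
  -- C, W, W⁻¹
  have hC' : C = A * (F * Matrix.diagonal s * Nᵀ) := by
    rw [hC, ← hAA, Matrix.mul_assoc, hSVD]
  have hCt : Cᵀ = N * (Matrix.diagonal s * (Fᵀ * A)) := by
    rw [hC']
    simp only [Matrix.transpose_mul, Matrix.transpose_transpose, Matrix.diagonal_transpose,
      hAt, Matrix.mul_assoc]
  have hW' : W = N * (Matrix.diagonal s * Matrix.diagonal s) * Nᵀ := by
    rw [hW, ← hAA]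
    calc Pᵀ * (A * A) * P = (A * P)ᵀ * (A * P) := by
          rw [Matrix.transpose_mul, hAt]; simp only [Matrix.mul_assoc]
      _ = (F * Matrix.diagonal s * Nᵀ)ᵀ * (F * Matrix.diagonal s * Nᵀ) := by rw [hSVD]
      _ = N * (Matrix.diagonal s * (Fᵀ * (F * (Matrix.diagonal s * Nᵀ)))) := by
          simp only [Matrix.transpose_mul, Matrix.transpose_transpose,
            Matrix.diagonal_transpose, Matrix.mul_assoc]
      _ = N * (Matrix.diagonal s * (Matrix.diagonal s * Nᵀ)) := by rw [cF]
      _ = N * (Matrix.diagonal s * Matrix.diagonal s) * Nᵀ := by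
          simp only [Matrix.mul_assoc]
  have hWright : W * (N * Matrix.diagonal sinv * Nᵀ) = 1 := by
    rw [hW']
    calc N * (Matrix.diagonal s * Matrix.diagonal s) * Nᵀ * (N * Matrix.diagonal sinv * Nᵀ)
        = N * (Matrix.diagonal s * (Matrix.diagonal s * (Nᵀ * (N * (Matrix.diagonal sinv * Nᵀ))))) := by
          simp only [Matrix.mul_assoc]
      _ = N * (Matrix.diagonal s * Matrix.diagonal s * Matrix.diagonal sinv * Nᵀ) := by
          rw [cN]; simp only [Matrix.mul_assoc]
      _ = 1 := by rw [keySS', Matrix.one_mul, hNN]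
  have hWi : W⁻¹ = N * Matrix.diagonal sinv * Nᵀ := Matrix.inv_eq_right_inv hWright
  have hkey1 : C * W⁻¹ * Cᵀ = A * F * (Fᵀ * A) := by
    rw [hWi, hCt, hC']
    calc A * (F * Matrix.diagonal s * Nᵀ) * (N * Matrix.diagonal sinv * Nᵀ) *
          (N * (Matrix.diagonal s * (Fᵀ * A)))
        = A * (F * (Matrix.diagonal s * (Nᵀ * (N * (Matrix.diagonal sinv *
            (Nᵀ * (N * (Matrix.diagonal s * (Fᵀ * A))))))))) := by
          simp only [Matrix.mul_assoc]
      _ = A * (F * (Matrix.diagonal s * (Matrix.diagonal sinv *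
            (Matrix.diagonal s * (Fᵀ * A))))) := by rw [cN, cN]
      _ = A * (F * (Fᵀ * A)) := by rw [cS]
      _ = A * F * (Fᵀ * A) := by rw [Matrix.mul_assoc]
  -- spectral data of M = (A F)ᵀ (A F)
  have hM : ((A * F)ᵀ * (A * F)).PosSemidef := by
    have h := Matrix.posSemidef_conjTranspose_mul_self (A * F)
    rwa [real_conjT] at h
  obtain ⟨V, hV1, hV2, hMeq⟩ := spectral hM.1
  set lam := hM.1.eigenvalues with hlamdef
  have hlam0 : ∀ i, 0 ≤ lam i := hM.eigenvalues_nonneg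
  have cV : ∀ {p : Type} [Fintype p] (X : Matrix (Fin m) p ℝ), Vᵀ * (V * X) = X := by
    intro p _ X; rw [← Matrix.mul_assoc, hV1, Matrix.one_mul]
  have cVt : ∀ {p : Type} [Fintype p] (X : Matrix (Fin m) p ℝ), V * (Vᵀ * X) = X := by
    intro p _ X; rw [← Matrix.mul_assoc, hV2, Matrix.one_mul]
  -- top-r index set
  obtain ⟨As, hAscard, htop⟩ := exists_top_set lam r (by rw [Fintype.card_fin]; exact hrm)
  have htop2 : ∀ i ∈ As, ∀ j ∉ As, lam j * lam j ≤ lam i * lam i := fun i hi j hj =>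
    mul_self_le_mul_self (hlam0 j) (htop i hi j hj)
  set femb : Fin r ↪ Fin m := (As.orderEmbOfFin hAscard).toEmbedding with hfembdef
  have hmap : Finset.univ.map femb = As := by
    ext i
    simp only [Finset.mem_map, Finset.mem_univ, true_and]
    constructor
    · rintro ⟨j, rfl⟩; exact As.orderEmbOfFin_mem hAscard j
    · intro hi
      have h1 := Finset.range_orderEmbOfFin As hAscard
      have h2 : i ∈ Set.range (As.orderEmbOfFin hAscard) := by rw [h1]; exact hi
      obtain ⟨j, hj⟩ := h2
      exact ⟨j, hj⟩
  set Vr := V.submatrix id femb with hVrdef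
  set H := F * Vr with hHdef
  have hVrVr : Vrᵀ * Vr = 1 := submatrix_orthonormal V hV1 femb femb.injective
  have hHH : Hᵀ * H = 1 := by
    rw [hHdef]
    calc (F * Vr)ᵀ * (F * Vr) = Vrᵀ * (Fᵀ * (F * Vr)) := by
          rw [Matrix.transpose_mul]; simp only [Matrix.mul_assoc]
      _ = Vrᵀ * Vr := by rw [cF]
      _ = 1 := hVrVr
  have cH : ∀ {p : Type} [Fintype p] (X : Matrix (Fin r) p ℝ), Hᵀ * (H * X) = X := by
    intro p _ X; rw [← Matrix.mul_assoc, hHH, Matrix.one_mul]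
  set efun : Fin m → ℝ := fun i => if i ∈ As then (1:ℝ) else 0 with hefundef
  set e'fun : Fin m → ℝ := fun i => if i ∈ As then (0:ℝ) else 1 with he'fundef
  have hVrE : Vr * Vrᵀ = V * Matrix.diagonal efun * Vᵀ := by
    have h := submatrix_mul_transpose_eq V femb
    rw [hVrdef]
    simp only [hmap] at h
    exact h
  -- G in terms of J = A F V
  have hGJ : A * H * Hᵀ * A = (A * F * V) * Matrix.diagonal efun * (A * F * V)ᵀ := by
    rw [hHdef]
    calc A * (F * Vr) * (F * Vr)ᵀ * A
        = A * (F * (Vr * (Vrᵀ * (Fᵀ * A)))) := by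
          simp only [Matrix.transpose_mul, hAt, Matrix.mul_assoc]
      _ = A * (F * ((Vr * Vrᵀ) * (Fᵀ * A))) := by simp only [Matrix.mul_assoc]
      _ = A * (F * ((V * Matrix.diagonal efun * Vᵀ) * (Fᵀ * A))) := by rw [hVrE]
      _ = (A * F * V) * Matrix.diagonal efun * (A * F * V)ᵀ := by
          simp only [Matrix.transpose_mul, hAt, Matrix.mul_assoc]
  have hJJ : (A * F * V)ᵀ * (A * F * V) = Matrix.diagonal lam := by
    calc (A * F * V)ᵀ * (A * F * V)
        = Vᵀ * ((A * F)ᵀ * (A * F) * V) := by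
          simp only [Matrix.transpose_mul, Matrix.mul_assoc]
      _ = Vᵀ * (V * (Matrix.diagonal lam * (Vᵀ * V))) := by
          rw [hMeq]; simp only [Matrix.mul_assoc]
      _ = Matrix.diagonal lam := by rw [cV, hV1, Matrix.mul_one]
  have hM0J : A * F * (Fᵀ * A) = (A * F * V) * (A * F * V)ᵀ := by
    calc A * F * (Fᵀ * A) = A * (F * (Fᵀ * A)) := by simp only [Matrix.mul_assoc]
      _ = A * (F * (V * (Vᵀ * (Fᵀ * A)))) := by rw [cVt]
      _ = (A * F * V) * (A * F * V)ᵀ := by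
          simp only [Matrix.transpose_mul, hAt, Matrix.mul_assoc]
  have hM0t : (A * F * (Fᵀ * A))ᵀ = A * F * (Fᵀ * A) := by
    simp only [Matrix.transpose_mul, Matrix.transpose_transpose, hAt, Matrix.mul_assoc]
  -- difference as J E' Jᵀ
  have hEE : Matrix.diagonal efun + Matrix.diagonal e'fun = 1 := by
    rw [Matrix.diagonal_add]
    ext i j
    by_cases hij : i = j
    · subst hij
      rw [Matrix.diagonal_apply_eq, Matrix.one_apply_eq, hefundef, he'fundef]
      by_cases h : i ∈ As <;> simp [h]
    · rw [Matrix.diagonal_apply_ne _ hij, Matrix.one_apply_ne hij]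
  have hsplit : A * F * (Fᵀ * A) - A * H * Hᵀ * A
      = (A * F * V) * Matrix.diagonal e'fun * (A * F * V)ᵀ := by
    rw [hGJ, hM0J]
    calc (A * F * V) * (A * F * V)ᵀ - (A * F * V) * Matrix.diagonal efun * (A * F * V)ᵀ
        = (A * F * V) * (Matrix.diagonal efun + Matrix.diagonal e'fun) * (A * F * V)ᵀ
            - (A * F * V) * Matrix.diagonal efun * (A * F * V)ᵀ := by rw [hEE, Matrix.mul_one]
      _ = (A * F * V) * Matrix.diagonal e'fun * (A * F * V)ᵀ := by
          rw [Matrix.mul_add, Matrix.add_mul, add_sub_cancel_left]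
  -- trace values
  have hGdistval : Matrix.trace ((A * F * (Fᵀ * A) - A * H * Hᵀ * A)ᵀ *
      (A * F * (Fᵀ * A) - A * H * Hᵀ * A)) = ∑ i, (if i ∈ As then 0 else lam i * lam i) := by
    rw [hsplit]
    have hsym : ((A * F * V) * Matrix.diagonal e'fun * (A * F * V)ᵀ)ᵀ
        = (A * F * V) * Matrix.diagonal e'fun * (A * F * V)ᵀ := by
      simp only [Matrix.transpose_mul, Matrix.transpose_transpose,
        Matrix.diagonal_transpose, Matrix.mul_assoc]
    rw [hsym, trace_conj_pair _ _ _ _ hJJ]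
    apply Finset.sum_congr rfl
    intro i _
    by_cases h : i ∈ As <;> simp [he'fundef, h] <;> ring
  have hM0sq : Matrix.trace ((A * F * (Fᵀ * A))ᵀ * (A * F * (Fᵀ * A)))
      = ∑ i, lam i * lam i := by
    rw [hM0t]
    have h1 : A * F * (Fᵀ * A) = (A * F * V) * Matrix.diagonal (fun _ : Fin m => (1:ℝ)) * (A * F * V)ᵀ := by
      rw [hM0J]
      have hone : Matrix.diagonal (fun _ : Fin m => (1:ℝ)) = 1 := Matrix.diagonal_one
      rw [hone, Matrix.mul_one]
    rw [h1]
    rw [trace_conj_pair _ _ _ _ hJJ]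
    apply Finset.sum_congr rfl
    intro i _
    ring
  have hsumsplit : ∑ i, (if i ∈ As then 0 else lam i * lam i)
      = ∑ i, lam i * lam i - ∑ i ∈ As, lam i * lam i := by
    have h1 : ∀ i, (if i ∈ As then (0:ℝ) else lam i * lam i)
        = lam i * lam i - (if i ∈ As then lam i * lam i else 0) := by
      intro i; by_cases h : i ∈ As <;> simp [h]
    rw [Finset.sum_congr rfl (fun i _ => h1 i), Finset.sum_sub_distrib,
      Finset.sum_ite_mem, Finset.univ_inter]
  -- trace of G and of K - G
  have htraceG : Matrix.trace (A * H * Hᵀ * A) = ∑ i ∈ As, lam i := by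
    rw [hGJ, Matrix.trace_mul_cycle, hJJ]
    rw [Matrix.diagonal_mul_diagonal, Matrix.trace_diagonal]
    have h1 : ∀ i, lam i * efun i = (if i ∈ As then lam i else 0) := by
      intro i; by_cases h : i ∈ As <;> simp [hefundef, h]
    rw [Finset.sum_congr rfl (fun i _ => h1 i), Finset.sum_ite_mem, Finset.univ_inter]
  have htraceKG : Matrix.trace (K - A * H * Hᵀ * A)
      = Matrix.trace K - ∑ i ∈ As, lam i := by
    rw [Matrix.trace_sub, htraceG]
  refine ⟨H, hHH, ?_, ?_, ?_⟩
  · -- best rank-r approximation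
    intro G' hG'
    rw [hkey1]
    apply Real.sqrt_le_sqrt
    obtain ⟨ιt, _, _, U, hcardU, hUU, hQX⟩ := exists_proj G' hG'
    have hQt : (U * Uᵀ)ᵀ = U * Uᵀ := by
      rw [Matrix.transpose_mul, Matrix.transpose_transpose]
    have hQQ : (U * Uᵀ) * (U * Uᵀ) = U * Uᵀ := by
      rw [Matrix.mul_assoc, ← Matrix.mul_assoc Uᵀ, hUU, Matrix.one_mul]
    set M0 := A * F * (Fᵀ * A) with hM0def
    set sqlam : Fin m → ℝ := fun i => Real.sqrt (lam i) with hsqlamdef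
    set R := (A * F * V) * Matrix.diagonal sqlam with hRdef
    have hsq2 : ∀ i, sqlam i * sqlam i = lam i := fun i => Real.mul_self_sqrt (hlam0 i)
    have hRR : Rᵀ * R = Matrix.diagonal (fun i => lam i * lam i) := by
      rw [hRdef]
      calc ((A * F * V) * Matrix.diagonal sqlam)ᵀ * ((A * F * V) * Matrix.diagonal sqlam)
          = Matrix.diagonal sqlam * ((A * F * V)ᵀ * (A * F * V)) * Matrix.diagonal sqlam := by
            simp only [Matrix.transpose_mul, Matrix.diagonal_transpose, Matrix.mul_assoc]
        _ = Matrix.diagonal sqlam * Matrix.diagonal lam * Matrix.diagonal sqlam := by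
            rw [hJJ]
        _ = Matrix.diagonal (fun i => lam i * lam i) := by
            simp only [Matrix.diagonal_mul_diagonal]
            have hfun : (fun i => sqlam i * lam i * sqlam i) = fun i => lam i * lam i := by
              funext i
              rw [show sqlam i * lam i * sqlam i = sqlam i * sqlam i * lam i by ring, hsq2 i]
            rw [hfun]
    have hRRt : R * Rᵀ = (A * F * V) * Matrix.diagonal lam * (A * F * V)ᵀ := by
      rw [hRdef]
      calc (A * F * V) * Matrix.diagonal sqlam * ((A * F * V) * Matrix.diagonal sqlam)ᵀ
          = (A * F * V) * (Matrix.diagonal sqlam * Matrix.diagonal sqlam) * (A * F * V)ᵀ := by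
            simp only [Matrix.transpose_mul, Matrix.diagonal_transpose, Matrix.mul_assoc]
        _ = (A * F * V) * Matrix.diagonal lam * (A * F * V)ᵀ := by
            rw [Matrix.diagonal_mul_diagonal]
            have hfun : (fun i => sqlam i * sqlam i) = lam := funext hsq2
            rw [hfun]
    have hM0M0 : M0 * M0 = R * Rᵀ := by
      rw [hM0J, hRRt]
      calc (A * F * V) * (A * F * V)ᵀ * ((A * F * V) * (A * F * V)ᵀ)
          = (A * F * V) * ((A * F * V)ᵀ * (A * F * V)) * (A * F * V)ᵀ := by
            simp only [Matrix.mul_assoc]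
        _ = (A * F * V) * Matrix.diagonal lam * (A * F * V)ᵀ := by rw [hJJ]
    -- the Y matrix
    set Y := Rᵀ * (U * Uᵀ) * R with hYdef
    have hYeq2 : Y = (Uᵀ * R)ᵀ * (Uᵀ * R) := by
      rw [hYdef]
      simp only [Matrix.transpose_mul, Matrix.transpose_transpose, Matrix.mul_assoc]
    have hYpsd : Y.PosSemidef := by
      rw [hYeq2]
      have h := Matrix.posSemidef_conjTranspose_mul_self (Uᵀ * R)
      rwa [real_conjT] at h
    have hYrank : Y.rank ≤ r := by
      have h1 : Y = (Rᵀ * U) * (Uᵀ * R) := by rw [hYdef]; simp only [Matrix.mul_assoc]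
      rw [h1]
      calc ((Rᵀ * U) * (Uᵀ * R)).rank ≤ (Rᵀ * U).rank := Matrix.rank_mul_le_left _ _
        _ ≤ Fintype.card ιt := Matrix.rank_le_card_width _
        _ ≤ r := hcardU
    have h1mQ : ((1 : Matrix (Fin n) (Fin n) ℝ) - U * Uᵀ).PosSemidef := by
      have hid : ((1 : Matrix (Fin n) (Fin n) ℝ) - U * Uᵀ) * (1 - U * Uᵀ) = 1 - U * Uᵀ := by
        rw [Matrix.sub_mul, Matrix.mul_sub, Matrix.mul_sub, hQQ]
        simp only [Matrix.one_mul, Matrix.mul_one]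
        abel
      have h := Matrix.posSemidef_conjTranspose_mul_self ((1 : Matrix (Fin n) (Fin n) ℝ) - U * Uᵀ)
      rwa [real_conjT, Matrix.transpose_sub, Matrix.transpose_one, hQt, hid] at h
    have hYle : (Matrix.diagonal (fun i => lam i * lam i) - Y).PosSemidef := by
      have h := h1mQ.conjTranspose_mul_mul_same R
      rw [real_conjT] at h
      have h2 : Rᵀ * (1 - U * Uᵀ) * R = Matrix.diagonal (fun i => lam i * lam i) - Y := by
        rw [Matrix.mul_sub, Matrix.sub_mul, Matrix.mul_one, hRR, hYdef]
      rwa [h2] at h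
    have hYtr : Matrix.trace Y ≤ ∑ i ∈ As, lam i * lam i := by
      apply lemmaA (1 : Matrix (Fin m) (Fin m) ℝ) (by rw [Matrix.transpose_one, Matrix.one_mul])
        (fun i => lam i * lam i) (fun i => mul_self_nonneg _) As hAscard htop2 Y hYpsd hYrank
      rwa [Matrix.transpose_one, Matrix.one_mul, Matrix.mul_one]
    -- the projection inequality
    have hexp := trace_expand M0 G'
    have hexpQ := trace_expand ((U * Uᵀ) * M0) G'
    have hnn := trace_tmul_nonneg ((U * Uᵀ) * M0 - G')
    have hcross : Matrix.trace (((U * Uᵀ) * M0)ᵀ * G') = Matrix.trace (M0ᵀ * G') := by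
      have h1 : ((U * Uᵀ) * M0)ᵀ * G' = M0ᵀ * ((U * Uᵀ) * G') := by
        rw [Matrix.transpose_mul, hQt]
        simp only [Matrix.mul_assoc]
      rw [h1, hQX]
    have hQM0 : Matrix.trace (((U * Uᵀ) * M0)ᵀ * ((U * Uᵀ) * M0)) = Matrix.trace Y := by
      have h1 : ((U * Uᵀ) * M0)ᵀ * ((U * Uᵀ) * M0) = M0ᵀ * ((U * Uᵀ) * M0) := by
        rw [Matrix.transpose_mul, hQt, Matrix.mul_assoc, ← Matrix.mul_assoc (U * Uᵀ), hQQ]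
      rw [h1]
      have h2 : M0ᵀ = M0 := hM0t
      rw [h2]
      calc Matrix.trace (M0 * ((U * Uᵀ) * M0))
          = Matrix.trace ((U * Uᵀ) * M0 * M0) := by
            rw [Matrix.trace_mul_comm]
        _ = Matrix.trace ((U * Uᵀ) * (R * Rᵀ)) := by
            rw [Matrix.mul_assoc (U * Uᵀ) M0 M0, hM0M0]
        _ = Matrix.trace Y := by
            rw [hYdef, ← Matrix.mul_assoc, Matrix.trace_mul_comm, ← Matrix.mul_assoc]
    -- assemble
    rw [hGdistval, hexp, hsumsplit]
    rw [hexpQ, hcross, hQM0] at hnn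
    linarith [hnn, hYtr, hM0sq]
  · -- positive semidefinite
    have hid : ((1 : Matrix (Fin n) (Fin n) ℝ) - H * Hᵀ) * (1 - H * Hᵀ) = 1 - H * Hᵀ := by
      have hHH2 : (H * Hᵀ) * (H * Hᵀ) = H * Hᵀ := by
        rw [Matrix.mul_assoc, ← Matrix.mul_assoc Hᵀ, hHH, Matrix.one_mul]
      rw [Matrix.sub_mul, Matrix.mul_sub, Matrix.mul_sub, hHH2]
      simp only [Matrix.one_mul, Matrix.mul_one]
      abel
    have hpsd1 : ((1 : Matrix (Fin n) (Fin n) ℝ) - H * Hᵀ).PosSemidef := by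
      have h := Matrix.posSemidef_conjTranspose_mul_self ((1 : Matrix (Fin n) (Fin n) ℝ) - H * Hᵀ)
      rwa [real_conjT, Matrix.transpose_sub, Matrix.transpose_one, Matrix.transpose_mul,
        Matrix.transpose_transpose, hid] at h
    have h := hpsd1.conjTranspose_mul_mul_same A
    rw [real_conjT, hAt] at h
    have h2 : A * (1 - H * Hᵀ) * A = K - A * H * Hᵀ * A := by
      rw [Matrix.mul_sub, Matrix.sub_mul, Matrix.mul_one, hAA]
      congr 1
      simp only [Matrix.mul_assoc]
    rwa [h2] at h
  · -- IsLeast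
    constructor
    · -- membership
      refine ⟨Vr * (Vrᵀ * (Fᵀ * A)), ?_, ?_⟩
      · calc (Vr * (Vrᵀ * (Fᵀ * A))).rank ≤ Vr.rank := Matrix.rank_mul_le_left _ _
          _ ≤ Fintype.card (Fin r) := Matrix.rank_le_card_width _
          _ = r := Fintype.card_fin r
      · have hFT0 : F * (Vr * (Vrᵀ * (Fᵀ * A))) = H * (Hᵀ * A) := by
          rw [hHdef]
          simp only [Matrix.transpose_mul, Matrix.mul_assoc]
        have hsq : frobNorm (A - F * (Vr * (Vrᵀ * (Fᵀ * A)))) ^ 2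
            = Matrix.trace ((A - F * (Vr * (Vrᵀ * (Fᵀ * A))))ᵀ *
              (A - F * (Vr * (Vrᵀ * (Fᵀ * A))))) := Real.sq_sqrt (trace_tmul_nonneg _)
        rw [hsq, hFT0, trace_expand]
        have t1 : Matrix.trace (Aᵀ * A) = Matrix.trace K := by rw [hAt, hAA]
        have t2 : Matrix.trace (Aᵀ * (H * (Hᵀ * A))) = ∑ i ∈ As, lam i := by
          rw [hAt, ← htraceG]
          congr 1
          simp only [Matrix.mul_assoc]
        have t3 : Matrix.trace ((H * (Hᵀ * A))ᵀ * (H * (Hᵀ * A))) = ∑ i ∈ As, lam i := by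
          have h1 : (H * (Hᵀ * A))ᵀ * (H * (Hᵀ * A)) = A * (H * (Hᵀ * A)) := by
            calc (H * (Hᵀ * A))ᵀ * (H * (Hᵀ * A))
                = Aᵀ * (H * (Hᵀ * (H * (Hᵀ * A)))) := by
                  simp only [Matrix.transpose_mul, Matrix.transpose_transpose,
                    Matrix.mul_assoc]
              _ = A * (H * (Hᵀ * A)) := by rw [cH, hAt]
          rw [h1, ← htraceG]
          congr 1
          simp only [Matrix.mul_assoc]
        rw [t1, t2, t3, htraceKG]
        ring
    · -- lower bound
      rintro x ⟨T, hTrank, rfl⟩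
      have hsq : frobNorm (A - F * T) ^ 2
          = Matrix.trace ((A - F * T)ᵀ * (A - F * T)) := Real.sq_sqrt (trace_tmul_nonneg _)
      rw [hsq, trace_expand, htraceKG]
      have t1 : Matrix.trace (Aᵀ * A) = Matrix.trace K := by rw [hAt, hAA]
      have t2 : (F * T)ᵀ * (F * T) = Tᵀ * T := by
        rw [Matrix.transpose_mul]
        calc Tᵀ * Fᵀ * (F * T) = Tᵀ * (Fᵀ * (F * T)) := by simp only [Matrix.mul_assoc]
          _ = Tᵀ * T := by rw [cF]
      have hclaim : 2 * Matrix.trace (Aᵀ * (F * T)) - Matrix.trace (Tᵀ * T)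
          ≤ ∑ i ∈ As, lam i := by
        obtain ⟨ιt, _, _, U, hcardU, hUU, hQT⟩ := exists_proj T hTrank
        have hQt : (U * Uᵀ)ᵀ = U * Uᵀ := by
          rw [Matrix.transpose_mul, Matrix.transpose_transpose]
        have hQQ : (U * Uᵀ) * (U * Uᵀ) = U * Uᵀ := by
          rw [Matrix.mul_assoc, ← Matrix.mul_assoc Uᵀ, hUU, Matrix.one_mul]
        set B := (A * F)ᵀ with hBdef
        have hnn := trace_tmul_nonneg ((U * Uᵀ) * B - T)
        rw [trace_expand] at hnn
        have hc1 : Matrix.trace (((U * Uᵀ) * B)ᵀ * T) = Matrix.trace (Aᵀ * (F * T)) := by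
          have h1 : ((U * Uᵀ) * B)ᵀ * T = Bᵀ * ((U * Uᵀ) * T) := by
            rw [Matrix.transpose_mul, hQt]
            simp only [Matrix.mul_assoc]
          rw [h1, hQT, hBdef, Matrix.transpose_transpose]
          congr 1
          rw [hAt]
          simp only [Matrix.mul_assoc]
        have hc2 : Matrix.trace (((U * Uᵀ) * B)ᵀ * ((U * Uᵀ) * B))
            ≤ ∑ i ∈ As, lam i := by
          have h1 : ((U * Uᵀ) * B)ᵀ * ((U * Uᵀ) * B) = Bᵀ * ((U * Uᵀ) * B) := by
            rw [Matrix.transpose_mul, hQt, Matrix.mul_assoc, ← Matrix.mul_assoc (U * Uᵀ), hQQ]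
          have h2 : Matrix.trace (Bᵀ * ((U * Uᵀ) * B))
              = Matrix.trace (Uᵀ * ((A * F)ᵀ * (A * F)) * U) := by
            calc Matrix.trace (Bᵀ * ((U * Uᵀ) * B))
                = Matrix.trace ((U * Uᵀ) * (B * Bᵀ)) := by
                  rw [Matrix.trace_mul_comm]
                  simp only [Matrix.mul_assoc]
              _ = Matrix.trace (Uᵀ * ((A * F)ᵀ * (A * F)) * U) := by
                  rw [hBdef, Matrix.transpose_transpose, Matrix.mul_assoc U Uᵀ,
                    Matrix.trace_mul_comm]
          rw [h1, h2]
          have h3 : Matrix.trace (Uᵀ * ((A * F)ᵀ * (A * F)) * U)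
              = Matrix.trace (Uᵀ * (V * Matrix.diagonal lam * Vᵀ) * U) := by rw [hMeq]
          rw [h3]
          exact kyfan V hV2 lam hlam0 As hAscard htop U hUU hcardU
        linarith [hnn, hc1, hc2]
      rw [t1, t2]
      linarith [hclaim]
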